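/- Define finite sets of positive integers M_k for k ∈ ℤ⁺ by M_1 = {1}, M_{2k} = {n+1 : n ∈ M_k}, and M_{2k+1} = M_{2k} ∪ {1} for k ≥ 1. Then for every positive integer k, the map j ↦ M_j restricted to indices 1 ≤ j < 2^k is a bijection onto the collection of all non-empty subsets of {1, 2, …, k}. -/

import Mathlib

/-- With `M 1 = {1}`, `M (2k) = {n+1 : n ∈ M k}` and `M (2k+1) = M (2k) ∪ {1}`, for every
positive integer `k` the map `j ↦ M j` restricted to `1 ≤ j < 2^k` is a bijection onto
the collection of non-empty subsets of `{1, …, k}`. -/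
theorem stmt_15 (M : ℕ+ → Finset ℕ+) (hM1 : M 1 = {1})
    (hM2 : ∀ k : ℕ+, M (2 * k) = (M k).image (fun n => n + 1))
    (hM3 : ∀ k : ℕ+, M (2 * k + 1) = M (2 * k) ∪ {1}) :
    ∀ k : ℕ+, Set.BijOn M {j : ℕ+ | j < 2 ^ (k : ℕ)}
      {S : Finset ℕ+ | S.Nonempty ∧ ∀ x ∈ S, x ≤ k} := by
  -- Key characterization: `x ∈ M j ↔ (x - 1) ∈ bitIndices j`.
  have key : ∀ j : ℕ+, ∀ x : ℕ+, (x ∈ M j ↔ ((x : ℕ) - 1) ∈ Nat.bitIndices (j : ℕ)) := by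
    intro j
    induction j using PNat.strongInductionOn with
    | _ j ih =>
      intro x
      have hx1 : 1 ≤ (x : ℕ) := x.pos
      rcases Nat.even_or_odd (j : ℕ) with ⟨m, hm⟩ | ⟨m, hm⟩
      · -- even case: j = 2 * m with m ≥ 1
        have hm1 : 0 < m := by have := j.pos; omega
        set k : ℕ+ := ⟨m, hm1⟩ with hk
        have hkc : (k : ℕ) = m := rfl
        have hjk : j = 2 * k := by
          apply PNat.coe_injective
          push_cast [hkc]
          omega
        have hklt : k < j := by
          rw [← PNat.coe_lt_coe, hkc]
          omega
        rw [hjk, hM2 k, Finset.mem_image]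
        have hcast : ((2 * k : ℕ+) : ℕ) = 2 * m := by push_cast [hkc]; ring
        rw [hcast, Nat.bitIndices_two_mul, List.mem_map]
        constructor
        · rintro ⟨y, hy, rfl⟩
          have hy1 : 1 ≤ (y : ℕ) := y.pos
          refine ⟨(y : ℕ) - 1, ?_, ?_⟩
          · rw [← hkc]; exact (ih k hklt y).mp hy
          · push_cast; omega
        · rintro ⟨b, hb, hbx⟩
          refine ⟨⟨b + 1, by omega⟩, ?_, ?_⟩
          · apply (ih k hklt _).mpr
            simpa [hkc] using hb
          · apply PNat.coe_injective
            change b + 1 + 1 = (x : ℕ)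
            omega
      · -- odd case: j = 2 * m + 1
        rcases Nat.eq_zero_or_pos m with rfl | hm1
        · -- j = 1
          have hj1 : j = 1 := by
            apply PNat.coe_injective
            simp [hm]
          rw [hj1, hM1, Finset.mem_singleton]
          simp only [PNat.one_coe, Nat.bitIndices_one, List.mem_singleton]
          constructor
          · rintro rfl; simp
          · intro h
            apply PNat.coe_injective
            simp only [PNat.one_coe]
            omega
        · set k : ℕ+ := ⟨m, hm1⟩ with hk
          have hkc : (k : ℕ) = m := rfl
          have hjk : j = 2 * k + 1 := by
            apply PNat.coe_injective
            push_cast [hkc]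
            omega
          have hklt : k < j := by
            rw [← PNat.coe_lt_coe, hkc]
            omega
          rw [hjk, hM3 k, hM2 k, Finset.mem_union, Finset.mem_image, Finset.mem_singleton]
          have hcast : ((2 * k + 1 : ℕ+) : ℕ) = 2 * m + 1 := by push_cast [hkc]; ring
          rw [hcast, Nat.bitIndices_two_mul_add_one, List.mem_cons, List.mem_map]
          constructor
          · rintro (⟨y, hy, rfl⟩ | rfl)
            · have hy1 : 1 ≤ (y : ℕ) := y.pos
              refine Or.inr ⟨(y : ℕ) - 1, ?_, ?_⟩
              · rw [← hkc]; exact (ih k hklt y).mp hy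
              · push_cast; omega
            · left; simp
          · rintro (h1 | ⟨b, hb, hbx⟩)
            · right
              apply PNat.coe_injective
              simp only [PNat.one_coe]
              omega
            · refine Or.inl ⟨⟨b + 1, by omega⟩, ?_, ?_⟩
              · apply (ih k hklt _).mpr
                simpa [hkc] using hb
              · apply PNat.coe_injective
                change b + 1 + 1 = (x : ℕ)
                omega
  intro k
  refine ⟨?_, ?_, ?_⟩
  · -- MapsTo
    intro j hj
    simp only [Set.mem_setOf_eq] at hj ⊢
    constructor
    · -- nonempty
      have hne : Nat.bitIndices (j : ℕ) ≠ [] := by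
        intro h
        have := Nat.twoPowSum_bitIndices (j : ℕ)
        rw [h] at this
        simp at this
        have := j.pos
        omega
      obtain ⟨b, hb⟩ := List.exists_mem_of_ne_nil _ hne
      exact ⟨⟨b + 1, by omega⟩, (key j _).mpr (by simpa using hb)⟩
    · intro x hx
      have hb := (key j x).mp hx
      have h2 : 2 ^ ((x : ℕ) - 1) ≤ (j : ℕ) := Nat.two_pow_le_of_mem_bitIndices hb
      have hjlt : (j : ℕ) < 2 ^ (k : ℕ) := by exact_mod_cast hj
      have hx1 : 1 ≤ (x : ℕ) := x.pos
      have : (x : ℕ) - 1 < (k : ℕ) := by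
        by_contra hcon
        push_neg at hcon
        exact absurd (le_trans (Nat.pow_le_pow_right (by norm_num) hcon) h2) (by omega)
      rw [← PNat.coe_le_coe]
      omega
  · -- InjOn
    intro a _ b _ hab
    apply PNat.coe_injective
    rw [← Nat.twoPowSum_bitIndices (a : ℕ), ← Nat.twoPowSum_bitIndices (b : ℕ)]
    have : Nat.bitIndices (a : ℕ) = Nat.bitIndices (b : ℕ) := by
      apply List.Perm.eq_of_pairwise' Nat.bitIndices_sorted.pairwise Nat.bitIndices_sorted.pairwise
      apply (List.perm_ext_iff_of_nodup (Nat.bitIndices_sorted.nodup) (Nat.bitIndices_sorted.nodup)).mpr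
      intro c
      have h1 := key a ⟨c + 1, by omega⟩
      have h2 := key b ⟨c + 1, by omega⟩
      simp only [PNat.mk_coe, Nat.add_sub_cancel] at h1 h2
      rw [← h1, ← h2, hab]
    rw [this]
  · -- SurjOn
    intro S hS
    obtain ⟨hSne, hSle⟩ := hS
    set T : Finset ℕ := S.image (fun x : ℕ+ => (x : ℕ) - 1) with hT
    set L : List ℕ := T.sort (· ≤ ·) with hL
    have hLsorted : L.Pairwise (· < ·) := (Finset.sortedLT_sort T).pairwise
    set n : ℕ := (L.map (fun i => 2 ^ i)).sum with hn
    have hbits : Nat.bitIndices n = L := Nat.bitIndices_twoPowsum hLsorted.sortedLT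
    have hLne : L ≠ [] := by
      intro h
      obtain ⟨x, hx⟩ := hSne
      have : ((x : ℕ) - 1) ∈ T := Finset.mem_image_of_mem _ hx
      rw [← Finset.mem_sort (· ≤ ·), ← hL, h] at this
      simp at this
    have hnpos : 0 < n := by
      rcases L with _ | ⟨a, L'⟩
      · exact absurd rfl hLne
      · simp only [hn, List.map_cons, List.sum_cons]
        positivity
    refine ⟨⟨n, hnpos⟩, ?_, ?_⟩
    · -- n < 2^k
      change n < ((2 ^ (k : ℕ) : ℕ+) : ℕ)
      push_cast
      show n < 2 ^ (k : ℕ)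
      have hsum : n = ∑ i ∈ T, 2 ^ i := by
        rw [hn, ← Finset.sum_map_toList]
        exact List.Perm.sum_eq (List.Perm.map _ (Finset.sort_perm_toList T (· ≤ ·)))
      rw [hsum]
      apply Nat.geomSum_lt le_rfl
      intro b hb
      rw [hT, Finset.mem_image] at hb
      obtain ⟨x, hx, rfl⟩ := hb
      have h1 : (x : ℕ) ≤ (k : ℕ) := by exact_mod_cast hSle x hx
      have := x.pos
      have := k.pos
      omega
    · -- M ⟨n⟩ = S
      ext x
      rw [key ⟨n, hnpos⟩ x]
      simp only [PNat.mk_coe]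
      rw [hbits, Finset.mem_sort, hT, Finset.mem_image]
      constructor
      · rintro ⟨y, hy, hyx⟩
        have : y = x := by
          apply PNat.coe_injective
          have := y.pos; have := x.pos
          omega
        rwa [← this]
      · intro hx; exact ⟨x, hx, rfl⟩
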